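/- Let m ∈ ℕ, C ⊆ ℝ nonempty compact, P ⊆ ℝ nonempty finite, with dist(C, P) ≥ diam(C). If C ∪ P is the attractor of a weak GIFS of order m (finite family of maps f : (C∪P)^m → C∪P with d(f(x),f(y)) < d_m(x,y) for x ≠ y, whose images of (C∪P)^m cover C∪P), then C is the attractor of a weak GIFS of order m on C. -/
import Mathlib


/-- If `C ⊆ ℝ` is nonempty compact, `P ⊆ ℝ` nonempty finite,
`dist(C,P) ≥ diam C`, and `C ∪ P` is the attractor of a weak GIFS of order
`m`, then `C` is the attractor of a weak GIFS of order `m` on `C`. -/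
theorem stmt_12 (m : ℕ) (C P : Set ℝ)
    (hCne : C.Nonempty) (hCcomp : IsCompact C)
    (hPne : P.Nonempty) (hPfin : P.Finite)
    (hsep : ∀ c ∈ C, ∀ p ∈ P, Metric.diam C ≤ dist c p)
    (N : ℕ) (F : Fin N → ((Fin m → (C ∪ P : Set ℝ)) → (C ∪ P : Set ℝ)))
    (hweak : ∀ j (x y : Fin m → (C ∪ P : Set ℝ)), x ≠ y →
      dist (F j x) (F j y) < dist x y)
    (hatt : (Set.univ : Set (C ∪ P : Set ℝ)) = ⋃ j, Set.range (F j)) :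
    ∃ (N' : ℕ) (G : Fin N' → ((Fin m → C) → C)),
      (∀ j (x y : Fin m → C), x ≠ y → dist (G j x) (G j y) < dist x y) ∧
        (Set.univ : Set C) = ⋃ j, Set.range (G j) := by
  classical
  obtain ⟨c₀, hc₀⟩ := hCne
  -- projection π : C ∪ P → C
  set π : (C ∪ P : Set ℝ) → C := fun a =>
    if h : (a : ℝ) ∈ C then ⟨a, h⟩ else ⟨c₀, hc₀⟩ with hπdef
  have hπC : ∀ (a : (C ∪ P : Set ℝ)) (h : (a : ℝ) ∈ C), π a = ⟨a, h⟩ := by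
    intro a h; simp [hπdef, h]
  have hπlip : ∀ a b : (C ∪ P : Set ℝ), dist (π a) (π b) ≤ dist a b := by
    intro a b
    have hd : ∀ u v : (C ∪ P : Set ℝ), dist u v = dist (u : ℝ) (v : ℝ) := by
      intro u v; rfl
    have hdc : ∀ u v : C, dist u v = dist (u : ℝ) (v : ℝ) := by
      intro u v; rfl
    by_cases ha : (a : ℝ) ∈ C <;> by_cases hb : (b : ℝ) ∈ C
    · simp [hπdef, ha, hb, hdc, hd]
    · have hbP : (b : ℝ) ∈ P := b.2.resolve_left hb
      have h1 : dist (a : ℝ) c₀ ≤ Metric.diam C :=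
        Metric.dist_le_diam_of_mem hCcomp.isBounded ha hc₀
      have h2 : Metric.diam C ≤ dist (a : ℝ) (b : ℝ) := hsep _ ha _ hbP
      simp only [hπdef, ha, hb, dif_pos, dif_neg, not_false_iff]
      rw [hdc, hd]
      exact le_trans h1 h2
    · have haP : (a : ℝ) ∈ P := a.2.resolve_left ha
      have h1 : dist c₀ (b : ℝ) ≤ Metric.diam C := by
        rw [dist_comm]; exact Metric.dist_le_diam_of_mem hCcomp.isBounded hb hc₀
      have h2 : Metric.diam C ≤ dist (a : ℝ) (b : ℝ) := by
        rw [dist_comm]; exact hsep _ hb _ haP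
      simp only [hπdef, ha, hb, dif_pos, dif_neg, not_false_iff]
      rw [hdc, hd]
      exact le_trans h1 h2
    · simp [hπdef, ha, hb, dist_nonneg]
  haveI : Fintype P := hPfin.fintype
  -- merge
  set merge : (Fin m → Option P) → (Fin m → C) → (Fin m → (C ∪ P : Set ℝ)) :=
    fun σ x i => match σ i with
      | some p => ⟨p, Or.inr p.2⟩
      | none => ⟨x i, Or.inl (x i).2⟩ with hmerge
  set J := Fin N × (Fin m → Option P) with hJ
  haveI : Fintype J := by infer_instance
  let e : Fin (Fintype.card J) ≃ J := (Fintype.equivFin J).symm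
  refine ⟨Fintype.card J, fun k x => π (F (e k).1 (merge (e k).2 x)), ?_, ?_⟩
  · intro k x y hxy
    have hxy' : dist x y > 0 := dist_pos.mpr hxy
    show dist (π (F (e k).1 (merge (e k).2 x))) (π (F (e k).1 (merge (e k).2 y))) < dist x y
    by_cases hz : merge (e k).2 x = merge (e k).2 y
    · rw [hz]
      simpa using hxy'
    · have h1 : dist (π (F (e k).1 (merge (e k).2 x))) (π (F (e k).1 (merge (e k).2 y)))
          ≤ dist (F (e k).1 (merge (e k).2 x)) (F (e k).1 (merge (e k).2 y)) := hπlip _ _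
      have h2 : dist (F (e k).1 (merge (e k).2 x)) (F (e k).1 (merge (e k).2 y))
          < dist (merge (e k).2 x) (merge (e k).2 y) := hweak _ _ _ hz
      have h3 : dist (merge (e k).2 x) (merge (e k).2 y) ≤ dist x y := by
        refine dist_pi_le_iff dist_nonneg |>.mpr ?_
        intro i
        cases hσ : (e k).2 i with
        | some p => simp [hmerge, hσ, dist_nonneg]
        | none =>
            have : dist (merge (e k).2 x i) (merge (e k).2 y i)
                = dist (x i) (y i) := by
              simp [hmerge, hσ, Subtype.dist_eq]
            rw [this]
            exact dist_le_pi_dist x y i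
      exact h1.trans_lt (h2.trans_le h3)
  · apply Set.eq_of_subset_of_subset
    · intro c _
      have hcC : ((⟨(c : ℝ), Or.inl c.2⟩ : (C ∪ P : Set ℝ))) ∈
          (Set.univ : Set (C ∪ P : Set ℝ)) := Set.mem_univ _
      rw [hatt] at hcC
      obtain ⟨_, ⟨j, rfl⟩, z, hz⟩ := hcC
      set σ : Fin m → Option P := fun i =>
        if h : ((z i : ℝ)) ∈ C then none
        else some ⟨z i, (z i).2.resolve_left h⟩ with hσ
      set x : Fin m → C := fun i =>
        if h : ((z i : ℝ)) ∈ C then ⟨z i, h⟩ else ⟨c₀, hc₀⟩ with hx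
      have hmz : merge σ x = z := by
        funext i
        by_cases h : ((z i : ℝ)) ∈ C
        · simp [hmerge, hσ, hx, h]
        · simp [hmerge, hσ, hx, h]
      refine Set.mem_iUnion.mpr ⟨e.symm ⟨j, σ⟩, x, ?_⟩
      simp only [Equiv.apply_symm_apply]
      rw [hmz, hz]
      exact hπC ⟨(c : ℝ), Or.inl c.2⟩ c.2
    · intro c _; trivial
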